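/- Let G be a group and R₁, …, R_{n+1} normal subgroups whose join is all of G (R₁⋯R_{n+1} = G). Then the image of R₁ ∩ ⋯ ∩ R_{n+1} in the quotient G / ∏_{I ⊔ J = {1,…,n+1}} [R_I, R_J] is central; equivalently, [R₁ ∩ ⋯ ∩ R_{n+1}, G] ≤ ∏_{I ⊔ J = {1,…,n+1}} [R_I, R_J]. -/

import Mathlib

/-- The join `∏_{I ⊔ J} [R_I, R_J]` of the commutator subgroups
`[⋂_{i∈I} Rᵢ, ⋂_{j∈J} Rⱼ]` over all pairs `(I, J)` of nonempty disjoint subsets of the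
index set with union everything. -/
def bigCommutatorJoin {G : Type*} [Group G] {ι : Type*} (R : ι → Subgroup G) : Subgroup G :=
  ⨆ I : Set ι, ⨆ J : Set ι,
    ⨆ _ : I.Nonempty ∧ J.Nonempty ∧ Disjoint I J ∧ I ∪ J = Set.univ,
      ⁅⨅ i ∈ I, R i, ⨅ j ∈ J, R j⁆

/-- The supremum of a family of normal subgroups is normal. -/
lemma normal_iSup_of_normal {G : Type*} [Group G] {ι : Sort*} (K : ι → Subgroup G)
    (hK : ∀ i, (K i).Normal) : (⨆ i, K i).Normal := by
  constructor
  intro x hx g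
  refine Subgroup.iSup_induction K (C := fun y => g * y * g⁻¹ ∈ ⨆ i, K i) hx
    (fun i y hy => ?_) (by simpa using one_mem _) (fun a b ha hb => ?_)
  · exact Subgroup.mem_iSup_of_mem i ((hK i).conj_mem y hy g)
  · show g * (a * b) * g⁻¹ ∈ _
    have : g * (a * b) * g⁻¹ = (g * a * g⁻¹) * (g * b * g⁻¹) := by group
    rw [this]; exact mul_mem ha hb

lemma normal_biInf {G : Type*} [Group G] {ι : Type*} (R : ι → Subgroup G)
    (hR : ∀ i, (R i).Normal) (I : Set ι) : (⨅ i ∈ I, R i).Normal := by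
  constructor
  intro x hx g
  simp only [Subgroup.mem_iInf] at hx ⊢
  exact fun i hi => (hR i).conj_mem x (hx i hi) g

lemma bigCommutatorJoin_normal {G : Type*} [Group G] {ι : Type*} (R : ι → Subgroup G)
    (hR : ∀ i, (R i).Normal) : (bigCommutatorJoin R).Normal := by
  refine normal_iSup_of_normal _ fun I => normal_iSup_of_normal _ fun J =>
    normal_iSup_of_normal _ fun _ => ?_
  have h1 := normal_biInf R hR I
  have h2 := normal_biInf R hR J
  exact Subgroup.commutator_normal _ _

open scoped commutatorElement

/-- let `G` be a group and `R₁, …, R_{n+1}` (`n ≥ 1`) normal subgroups whose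
join is all of `G`.  Then the image of `R₁ ∩ ⋯ ∩ R_{n+1}` in
`G / ∏_{I ⊔ J = {1,…,n+1}} [R_I, R_J]` is central; equivalently,
`[R₁ ∩ ⋯ ∩ R_{n+1}, G] ≤ ∏_{I ⊔ J = {1,…,n+1}} [R_I, R_J]`. -/
theorem commutator_iInf_top_le_bigCommutatorJoin {G : Type*} [Group G] (n : ℕ) (hn : 1 ≤ n)
    (R : Fin (n + 1) → Subgroup G) (hR : ∀ i, (R i).Normal)
    (hjoin : (⨆ i, R i) = (⊤ : Subgroup G)) :
    ⁅(⨅ i, R i : Subgroup G), (⊤ : Subgroup G)⁆ ≤ bigCommutatorJoin R := by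
  have hT : (bigCommutatorJoin R).Normal := bigCommutatorJoin_normal R hR
  rw [Subgroup.commutator_le]
  intro h hh g hg
  rw [← hjoin] at hg
  refine Subgroup.iSup_induction R (C := fun g => ⁅h, g⁆ ∈ bigCommutatorJoin R) hg
    (fun j x hx => ?_) (by simpa using one_mem _) (fun a b ha hb => ?_)
  · -- base case: x ∈ R j, use I = {j}ᶜ, J = {j}
    haveI : Nontrivial (Fin (n + 1)) := Fin.nontrivial_iff_two_le.mpr (by omega)
    obtain ⟨k, hk⟩ := exists_ne j
    have hIne : ({j}ᶜ : Set (Fin (n + 1))).Nonempty := ⟨k, hk⟩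
    have key : ⁅⨅ i ∈ ({j}ᶜ : Set (Fin (n+1))), R i, ⨅ i ∈ ({j} : Set (Fin (n+1))), R i⁆
        ≤ bigCommutatorJoin R := by
      refine le_trans ?_ (le_iSup _ ({j}ᶜ : Set (Fin (n+1))))
      refine le_trans ?_ (le_iSup _ ({j} : Set (Fin (n+1))))
      exact le_iSup_of_le ⟨hIne, Set.singleton_nonempty j,
        disjoint_compl_left, Set.compl_union_self _⟩ le_rfl
    refine key (Subgroup.commutator_mem_commutator ?_ ?_)
    · simp only [Subgroup.mem_iInf]
      intro i _
      exact Subgroup.mem_iInf.mp hh i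
    · simpa using hx
  · show ⁅h, a * b⁆ ∈ _
    have : ⁅h, a * b⁆ = ⁅h, a⁆ * (a * ⁅h, b⁆ * a⁻¹) := by
      simp only [commutatorElement_def]; group
    rw [this]
    exact mul_mem ha (hT.conj_mem _ hb a)
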